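/- For every prime p there exists a finite group Y of order p^9 such that CD(Y) is a quasi-antichain of width p + 1 with Y ∈ CD(Y), where exactly one of the three atoms of CD(Y) is abelian if p = 2, and exactly two of the p + 1 atoms of CD(Y) are abelian if p is odd. -/

import Mathlib

/-- The Chermak-Delgado measure of a subgroup `H` of a finite group `G`:
`m_G(H) = |H| · |C_G(H)|`. -/
noncomputable def CDmeasure {G : Type*} [Group G] (H : Subgroup G) : ℕ :=
  Nat.card H * Nat.card (Subgroup.centralizer (H : Set G))

/-- `H` belongs to the Chermak-Delgado lattice of `G`: its measure is maximal. -/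
def inCD {G : Type*} [Group G] (H : Subgroup G) : Prop :=
  ∀ K : Subgroup G, CDmeasure K ≤ CDmeasure H

/-- `Y` has order `p^9`, `CD(Y)` is a quasi-antichain of width `p + 1` with
`Y ∈ CD(Y)`, and the number of abelian atoms is 1 if `p = 2` and 2 if `p` is
odd. -/
def GoodCDwidthPplus1' (Y : Type*) [Group Y] [Finite Y] (p : ℕ) : Prop :=
  Nat.card Y = p ^ 9 ∧
  inCD (⊤ : Subgroup Y) ∧ inCD (Subgroup.center Y) ∧
  (∀ K : Subgroup Y, inCD K → Subgroup.center Y ≤ K) ∧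
  (∀ K K' : Subgroup Y, inCD K → inCD K' →
    Subgroup.center Y < K → K ≤ K' → K' < ⊤ → K = K') ∧
  {K : Subgroup Y | inCD K ∧ Subgroup.center Y < K ∧ K < ⊤}.ncard = p + 1 ∧
  (p = 2 → {K : Subgroup Y | inCD K ∧ Subgroup.center Y < K ∧ K < ⊤ ∧
    ∀ x y : K, x * y = y * x}.ncard = 1) ∧
  (Odd p → {K : Subgroup Y | inCD K ∧ Subgroup.center Y < K ∧ K < ⊤ ∧
    ∀ x y : K, x * y = y * x}.ncard = 2)


open Polynomial
noncomputable section

namespace S19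

variable (p : ℕ) [hp : Fact p.Prime]

abbrev K := GaloisField p 3

lemma card_K : Nat.card (K p) = p ^ 3 := GaloisField.card p 3 (by norm_num)

lemma one_lt_p : 1 < p := (Fact.out : p.Prime).one_lt
lemma p_ne_zero : p ≠ 0 := (Fact.out : p.Prime).ne_zero

lemma frob_add (a b : K p) : (a + b) ^ p = a ^ p + b ^ p := add_pow_char _ _ _

lemma frob_sub (a b : K p) : (a - b) ^ p = a ^ p - b ^ p := by
  have := sub_pow_char (R := K p) a b (p := p); exact this

lemma frob_neg (a : K p) : (-a) ^ p = -(a ^ p) := by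
  have := frob_sub p 0 a; simpa [zero_pow (p_ne_zero p)] using this

noncomputable instance : Fintype (K p) := Fintype.ofFinite _

lemma fintype_card_K : Fintype.card (K p) = p ^ 3 := by
  rw [← Nat.card_eq_fintype_card, card_K]

lemma pow_card_K (a : K p) : a ^ (p ^ 3) = a := by
  rw [← fintype_card_K]; exact FiniteField.pow_card a

lemma frob_frob_frob (a : K p) : ((a ^ p) ^ p) ^ p = a := by
  rw [← pow_mul, ← pow_mul]
  rw [show p * (p * p) = p ^ 3 by ring]

  exact pow_card_K p a

lemma frob_inj {a b : K p} (h : a ^ p = b ^ p) : a = b := by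
  have h0 : (a - b) ^ p = 0 := by rw [frob_sub, h, sub_self]
  have := pow_eq_zero_iff (p_ne_zero p) |>.mp h0
  exact sub_eq_zero.mp this

/-- root-counting bound for linearized polynomials `a X^p - b X`. -/
lemma rootBound (a b : K p) (ha : a ≠ 0) :
    {x : K p | a * x ^ p - b * x = 0}.ncard ≤ p := by
  classical
  set q : (K p)[X] := C a * X ^ p - C b * X with hq
  have hqne : q ≠ 0 := by
    intro h0
    have : q.coeff p = a := by
      simp only [hq, Polynomial.coeff_sub, Polynomial.coeff_C_mul,
        Polynomial.coeff_X_pow, coeff_X, if_pos rfl]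
      rw [if_neg (one_lt_p p).ne]
      simp
    rw [h0] at this; simp at this; exact ha this.symm
  have hsub : {x : K p | a * x ^ p - b * x = 0} ⊆ (q.roots.toFinset : Set (K p)) := by
    intro x hx
    simp only [Multiset.mem_toFinset, Finset.coe_sort_coe, Finset.mem_coe]
    rw [mem_roots']
    refine ⟨hqne, ?_⟩
    simp only [IsRoot, hq, eval_sub, eval_mul, eval_C, eval_pow, eval_X]
    exact hx
  calc {x : K p | a * x ^ p - b * x = 0}.ncard
      ≤ (q.roots.toFinset : Set (K p)).ncard := Set.ncard_le_ncard hsub (Set.toFinite _)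
    _ = q.roots.toFinset.card := by rw [Set.ncard_coe_finset]
    _ ≤ Multiset.card q.roots := Multiset.toFinset_card_le _
    _ ≤ q.natDegree := card_roots' q
    _ ≤ p := by
        apply le_trans (natDegree_sub_le _ _)
        simp only [sup_le_iff]
        constructor
        · exact le_trans (natDegree_C_mul_le _ _) (le_of_eq (natDegree_X_pow p))
        · exact le_trans (natDegree_C_mul_le _ _) (by simp; exact (one_lt_p p).le)

lemma fix_card : {x : K p | x ^ p - x = 0}.ncard ≤ p := by
  have := rootBound p 1 1 one_ne_zero
  simpa using this

lemma exists_nonfix : ∃ τ : K p, τ ^ p ≠ τ := by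
  by_contra h
  push_neg at h
  have : (Set.univ : Set (K p)) ⊆ {x : K p | x ^ p - x = 0} := by
    intro x _; simp [h x]
  have hle := Set.ncard_le_ncard this (Set.toFinite _)
  rw [Set.ncard_univ, card_K] at hle
  have := fix_card p
  have h2 : p ^ 3 ≤ p := le_trans hle this
  have h3 : p < p ^ 3 := by
    calc p = p ^ 1 := (pow_one p).symm
    _ < p ^ 3 := Nat.pow_lt_pow_right (one_lt_p p) (by norm_num)
  omega

/-- elements fixed by Frobenius are in the prime field -/
lemma fix_mem_range {u : K p} (h : u ^ p = u) :
    ∃ n : ZMod p, algebraMap (ZMod p) (K p) n = u := by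
  classical
  have hinj : Function.Injective (algebraMap (ZMod p) (K p)) :=
    (algebraMap (ZMod p) (K p)).injective
  set S := (Set.range (algebraMap (ZMod p) (K p)))
  have hsub : S ⊆ {x : K p | x ^ p - x = 0} := by
    rintro _ ⟨n, rfl⟩
    simp only [Set.mem_setOf_eq, ← map_pow, ZMod.pow_card, sub_self]
  have hS : S.ncard = p := by
    rw [← Nat.card_coe_set_eq, Nat.card_congr (Equiv.ofInjective _ hinj).symm]
    simp [Nat.card_eq_fintype_card, ZMod.card]
  have := Set.eq_of_subset_of_ncard_le hsub (by rw [hS]; exact fix_card p) (Set.toFinite _)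
  have hu : u ∈ S := by rw [this]; simp [sub_eq_zero.mpr, h]
  exact hu





/-- the commutator form -/
def Bf (u v : K p × K p) : K p :=
  u.1 * v.1 ^ p - u.1 ^ p * v.1 - (u.2 * v.2 ^ p - u.2 ^ p * v.2)

def Af (w v : K p × K p) : K p := w.1 * v.1 ^ p - w.2 * v.2 ^ p
def Bb (w v : K p × K p) : K p := w.1 ^ p * v.1 - w.2 ^ p * v.2
def Pw (w : K p × K p) : Set (K p × K p) := {v | Af p w v = 0 ∧ Bb p w v = 0}
def Rw (w : K p × K p) : K p := w.1 ^ p * w.2 - w.1 * w.2 ^ p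
def dt (u v : K p × K p) : K p := u.1 * v.2 - u.2 * v.1

lemma Bf_eq (w v : K p × K p) : Bf p w v = Af p w v - Bb p w v := by
  simp only [Bf, Af, Bb]; ring

lemma smul_fst (c : K p) (w : K p × K p) : (c • w).1 = c * w.1 := rfl
lemma smul_snd (c : K p) (w : K p × K p) : (c • w).2 = c * w.2 := rfl

lemma Bf_smul_left (c : K p) (w v : K p × K p) :
    Bf p (c • w) v = c * Af p w v - c ^ p * Bb p w v := by
  simp only [Bf, Af, Bb, smul_fst, smul_snd, mul_pow]; ring

lemma Bf_add_right (u v w : K p × K p) :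
    Bf p u (v + w) = Bf p u v + Bf p u w := by
  simp only [Bf, Prod.fst_add, Prod.snd_add, frob_add]; ring

lemma Bf_add_left (u v w : K p × K p) :
    Bf p (u + v) w = Bf p u w + Bf p v w := by
  simp only [Bf, Prod.fst_add, Prod.snd_add, frob_add]; ring

lemma Bf_zero_right (u : K p × K p) : Bf p u 0 = 0 := by
  simp [Bf, zero_pow (p_ne_zero p)]

lemma Bf_zero_left (u : K p × K p) : Bf p 0 u = 0 := by
  simp [Bf, zero_pow (p_ne_zero p)]

lemma Bf_neg_right (u v : K p × K p) : Bf p u (-v) = - Bf p u v := by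
  simp only [Bf, Prod.fst_neg, Prod.snd_neg, frob_neg]; ring

lemma Bf_skew (u v : K p × K p) : Bf p v u = - Bf p u v := by
  simp only [Bf]; ring

/-- if `v` is orthogonal to `w` and to `c • w` with `c` not fixed by Frobenius,
then `v ∈ Pw w`. -/
lemma ortho_pair (w v : K p × K p) (c : K p) (hc : c ^ p ≠ c)
    (h1 : Bf p w v = 0) (h2 : Bf p (c • w) v = 0) : v ∈ Pw p w := by
  rw [Bf_eq, sub_eq_zero] at h1
  rw [Bf_smul_left, h1, sub_eq_zero] at h2
  have : (c - c ^ p) * Bb p w v = 0 := by rw [sub_mul, h2, sub_self]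
  rcases mul_eq_zero.mp this with h | h
  · exact absurd (sub_eq_zero.mp h).symm hc
  · exact ⟨by rw [h1, h], h⟩

lemma dep_scalar (w v : K p × K p) (hw : w ≠ 0) (h : dt p w v = 0) :
    ∃ c : K p, v = c • w := by
  have h' : w.1 * v.2 = w.2 * v.1 := by
    have h2 : w.1 * v.2 - w.2 * v.1 = 0 := h
    linear_combination h2
  by_cases h1 : w.1 = 0
  · have h2 : w.2 ≠ 0 := fun h2 => hw (Prod.ext h1 h2)
    have hv1 : v.1 = 0 := by
      have hz : w.2 * v.1 = 0 := by rw [← h', h1, zero_mul]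
      exact (mul_eq_zero.mp hz).resolve_left h2
    refine ⟨v.2 / w.2, Prod.ext ?_ ?_⟩
    · rw [smul_fst, h1, mul_zero, hv1]
    · rw [smul_snd]; field_simp
  · refine ⟨v.1 / w.1, Prod.ext ?_ ?_⟩
    · rw [smul_fst]; field_simp
    · rw [smul_snd]; field_simp; linear_combination h'




def lineA (w : K p × K p) : AddSubgroup (K p × K p) where
  carrier := {v | dt p w v = 0}
  add_mem' := by
    intro a b ha hb
    simp only [Set.mem_setOf_eq, dt, Prod.fst_add, Prod.snd_add] at *
    linear_combination ha + hb
  zero_mem' := by simp [dt]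
  neg_mem' := by
    intro a ha
    simp only [Set.mem_setOf_eq, dt, Prod.fst_neg, Prod.snd_neg] at *
    linear_combination -ha

def perp (U : AddSubgroup (K p × K p)) : AddSubgroup (K p × K p) where
  carrier := {v | ∀ u ∈ U, Bf p u v = 0}
  add_mem' := by
    intro a b ha hb u hu
    rw [Bf_add_right, ha u hu, hb u hu, add_zero]
  zero_mem' := fun u _ => Bf_zero_right p u
  neg_mem' := by
    intro a ha u hu
    rw [Bf_neg_right, ha u hu, neg_zero]

lemma mem_lineA {w v : K p × K p} : v ∈ lineA p w ↔ dt p w v = 0 := Iff.rfl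
lemma mem_perp {U : AddSubgroup (K p × K p)} {v : K p × K p} :
    v ∈ perp p U ↔ ∀ u ∈ U, Bf p u v = 0 := Iff.rfl

lemma smul_mem_lineA (c : K p) (w : K p × K p) : c • w ∈ lineA p w := by
  simp only [mem_lineA, dt, smul_fst, smul_snd]; ring

lemma card_V : Nat.card (K p × K p) = p ^ 6 := by
  rw [Nat.card_prod, card_K]; ring

lemma card_subgroup_eq_ncard (U : AddSubgroup (K p × K p)) :
    Nat.card U = (U : Set (K p × K p)).ncard :=
  Nat.card_coe_set_eq _

lemma smul_w_injective {w : K p × K p} (hw : w ≠ 0) :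
    Function.Injective (fun c : K p => c • w) := by
  intro a b hab
  simp only at hab
  have h1 : a * w.1 = b * w.1 := congrArg Prod.fst hab
  have h2 : a * w.2 = b * w.2 := congrArg Prod.snd hab
  by_cases hw1 : w.1 = 0
  · have hw2 : w.2 ≠ 0 := fun h => hw (Prod.ext hw1 h)
    exact mul_right_cancel₀ hw2 h2
  · exact mul_right_cancel₀ hw1 h1

lemma lineA_eq_image {w : K p × K p} (hw : w ≠ 0) :
    (lineA p w : Set (K p × K p)) = Set.range (fun c : K p => c • w) := by
  ext v
  constructor
  · intro hv
    obtain ⟨c, rfl⟩ := dep_scalar p w v hw hv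
    exact ⟨c, rfl⟩
  · rintro ⟨c, rfl⟩
    exact smul_mem_lineA p c w

lemma card_lineA {w : K p × K p} (hw : w ≠ 0) :
    (lineA p w : Set (K p × K p)).ncard = p ^ 3 := by
  rw [lineA_eq_image p hw, ← Nat.card_coe_set_eq,
    Nat.card_congr (Equiv.ofInjective _ (smul_w_injective p hw)).symm, card_K]

lemma card_ker_mul_card_range {A B : Type*} [AddGroup A] [AddGroup B] [Finite A]
    (φ : A →+ B) : Nat.card φ.ker * Nat.card φ.range = Nat.card A := by
  rw [AddSubgroup.card_eq_card_quotient_mul_card_addSubgroup φ.ker,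
      Nat.card_congr (QuotientAddGroup.quotientKerEquivRange φ).toEquiv]
  ring

def BfHom (u : K p × K p) : (K p × K p) →+ K p :=
  AddMonoidHom.mk' (fun v => Bf p u v) (Bf_add_right p u)

lemma card_ker_single {u : K p × K p} (hu : u ≠ 0) :
    {v : K p × K p | Bf p u v = 0}.ncard ≤ p ^ 4 := by
  classical
  set φ := BfHom p u with hφ
  have hset : {v : K p × K p | Bf p u v = 0} = (φ.ker : Set (K p × K p)) := rfl
  have hkr : Nat.card φ.ker * Nat.card φ.range = p ^ 6 := by
    rw [card_ker_mul_card_range, card_V]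
  -- choose the nonzero coordinate
  have hcases : u.1 ≠ 0 ∨ u.2 ≠ 0 := by
    by_contra h
    push_neg at h
    exact hu (Prod.ext h.1 h.2)
  -- in either case we produce ψ : K →+ K with range ≤ φ.range and small kernel
  obtain ⟨ψ, hle, hker⟩ :
      ∃ ψ : K p →+ K p, ψ.range ≤ φ.range ∧ (ψ.ker : Set (K p)).ncard ≤ p := by
    rcases hcases with h1 | h2
    · refine ⟨φ.comp (AddMonoidHom.inl (K p) (K p)), ?_, ?_⟩
      · rintro y ⟨x, rfl⟩; exact ⟨(x, 0), rfl⟩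
      · have : ((φ.comp (AddMonoidHom.inl (K p) (K p))).ker : Set (K p)) ⊆
            {x : K p | u.1 * x ^ p - u.1 ^ p * x = 0} := by
          intro x hx
          have hx' : Bf p u (x, 0) = 0 := hx
          simpa [Bf, zero_pow (p_ne_zero p)] using hx'
        exact le_trans (Set.ncard_le_ncard this (Set.toFinite _)) (rootBound p _ _ h1)
    · refine ⟨φ.comp (AddMonoidHom.inr (K p) (K p)), ?_, ?_⟩
      · rintro y ⟨x, rfl⟩; exact ⟨(0, x), rfl⟩
      · have : ((φ.comp (AddMonoidHom.inr (K p) (K p))).ker : Set (K p)) ⊆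
            {x : K p | u.2 * x ^ p - u.2 ^ p * x = 0} := by
          intro x hx
          have hx' : Bf p u (0, x) = 0 := hx
          have : -(u.2 * x ^ p - u.2 ^ p * x) = 0 := by
            simpa [Bf, zero_pow (p_ne_zero p)] using hx'
          show u.2 * x ^ p - u.2 ^ p * x = 0
          linear_combination -this
        exact le_trans (Set.ncard_le_ncard this (Set.toFinite _)) (rootBound p _ _ h2)
  have hψ : Nat.card ψ.ker * Nat.card ψ.range = p ^ 3 := by
    rw [card_ker_mul_card_range, card_K]
  have hkψ : Nat.card ψ.ker ≤ p :=
    le_trans (le_of_eq (Nat.card_coe_set_eq (ψ.ker : Set (K p)))) hker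
  have hrψ : p ^ 2 ≤ Nat.card ψ.range := by
    by_contra hlt
    push_neg at hlt
    have : Nat.card ψ.ker * Nat.card ψ.range < p * p ^ 2 := by
      apply Nat.mul_lt_mul_of_le_of_lt hkψ hlt
      exact (Fact.out : p.Prime).pos
    rw [hψ] at this
    have : p ^ 3 < p ^ 3 := by
      calc p ^ 3 < p * p ^ 2 := this
        _ = p ^ 3 := by ring
    omega
  have hrange : p ^ 2 ≤ Nat.card φ.range :=
    le_trans hrψ (AddSubgroup.card_le_of_le hle)
  have : Nat.card φ.ker * p ^ 2 ≤ p ^ 6 := by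
    calc Nat.card φ.ker * p ^ 2 ≤ Nat.card φ.ker * Nat.card φ.range :=
          Nat.mul_le_mul_left _ hrange
      _ = p ^ 6 := hkr
  have hfin : Nat.card φ.ker ≤ p ^ 4 := by
    have hp2 : 0 < p ^ 2 := pow_pos (Fact.out : p.Prime).pos 2
    have := Nat.le_of_mul_le_mul_right (by
      calc Nat.card φ.ker * p ^ 2 ≤ p ^ 6 := this
        _ = p ^ 4 * p ^ 2 := by ring) hp2
    exact this
  rw [hset, ← Nat.card_coe_set_eq]
  exact hfin




def Fx : Set (K p) := {x | x ^ p - x = 0}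

lemma Fx_card : (Fx p).ncard ≤ p := fix_card p

/-- solutions of a "Frobenius = linear map" system form a set of size at most `p^2` -/
lemma card_E (g11 g12 g21 g22 : K p) :
    {v : K p × K p | v.1 ^ p = g11 * v.1 + g12 * v.2 ∧
      v.2 ^ p = g21 * v.1 + g22 * v.2}.ncard ≤ p ^ 2 := by
  classical
  set E := {v : K p × K p | v.1 ^ p = g11 * v.1 + g12 * v.2 ∧
      v.2 ^ p = g21 * v.1 + g22 * v.2} with hE
  have hp2 : 1 ≤ p ^ 2 := Nat.one_le_pow _ _ (Fact.out : p.Prime).pos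
  by_cases hne : ∀ v ∈ E, v = (0 : K p × K p)
  · have hsub : E ⊆ {(0 : K p × K p)} := fun v hv => hne v hv
    calc E.ncard ≤ ({(0 : K p × K p)} : Set _).ncard :=
          Set.ncard_le_ncard hsub (Set.toFinite _)
      _ = 1 := Set.ncard_singleton _
      _ ≤ p ^ 2 := hp2
  push_neg at hne
  obtain ⟨v₁, hv₁E, hv₁0⟩ := hne
  have hv₁E' := hv₁E
  rw [hE, Set.mem_setOf_eq] at hv₁E'
  have hv1p : v₁.1 ≠ 0 ∨ v₁.2 ≠ 0 := by
    by_contra h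
    push_neg at h
    exact hv₁0 (Prod.ext h.1 h.2)
  by_cases hdep : ∀ v ∈ E, dt p v₁ v = 0
  · -- all elements are Frobenius-fixed multiples of v₁
    have key : ∀ v ∈ E, ∃ c : K p, c ∈ Fx p ∧ v = c • v₁ := by
      intro v hv
      obtain ⟨c, rfl⟩ := dep_scalar p v₁ v hv₁0 (hdep v hv)
      refine ⟨c, ?_, rfl⟩
      rw [hE, Set.mem_setOf_eq] at hv
      have e1 : (c * v₁.1) ^ p = g11 * (c * v₁.1) + g12 * (c * v₁.2) := hv.1
      have e2 : (c * v₁.2) ^ p = g21 * (c * v₁.1) + g22 * (c * v₁.2) := hv.2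
      have h1 : (c ^ p - c) * v₁.1 ^ p = 0 := by
        have := hv₁E'.1
        rw [mul_pow] at e1
        linear_combination e1 - c * this
      have h2 : (c ^ p - c) * v₁.2 ^ p = 0 := by
        have := hv₁E'.2
        rw [mul_pow] at e2
        linear_combination e2 - c * this
      show c ^ p - c = 0
      rcases hv1p with h | h
      · exact (mul_eq_zero.mp h1).resolve_right (pow_ne_zero _ h)
      · exact (mul_eq_zero.mp h2).resolve_right (pow_ne_zero _ h)
    choose f hf1 hf2 using key
    have hinj : Nat.card E ≤ Nat.card (Fx p) := by
      apply Nat.card_le_card_of_injective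
        (fun v : E => (⟨f v.1 v.2, hf1 v.1 v.2⟩ : Fx p))
      intro a b hab
      simp only [Subtype.mk.injEq] at hab
      apply Subtype.ext
      rw [hf2 a.1 a.2, hf2 b.1 b.2, hab]
    calc E.ncard = Nat.card E := (Nat.card_coe_set_eq _).symm
      _ ≤ Nat.card (Fx p) := hinj
      _ = (Fx p).ncard := Nat.card_coe_set_eq _
      _ ≤ p := Fx_card p
      _ ≤ p ^ 2 := by
          calc p = p ^ 1 := (pow_one p).symm
            _ ≤ p ^ 2 := Nat.pow_le_pow_right (Fact.out : p.Prime).pos (by norm_num)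
  · push_neg at hdep
    obtain ⟨v₂, hv₂E, hd⟩ := hdep
    have hv₂E' := hv₂E
    rw [hE, Set.mem_setOf_eq] at hv₂E'
    have key : ∀ v ∈ E, ∃ a b : K p, a ∈ Fx p ∧ b ∈ Fx p ∧ v = a • v₁ + b • v₂ := by
      intro v hv
      rw [hE, Set.mem_setOf_eq] at hv
      have hdne : dt p v₁ v₂ ≠ 0 := hd
      set d := dt p v₁ v₂ with hdd
      have hdne' : d ≠ 0 := hdne
      have hdpe : d ^ p = v₁.1 ^ p * v₂.2 ^ p - v₁.2 ^ p * v₂.1 ^ p := by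
        rw [hdd]; simp only [dt, frob_sub, mul_pow]
      set a := dt p v v₂ / d with ha
      set b := dt p v₁ v / d with hb
      have hid1 : dt p v v₂ * v₁.1 + dt p v₁ v * v₂.1 = v.1 * d := by
        rw [hdd]; simp only [dt]; ring
      have hid2 : dt p v v₂ * v₁.2 + dt p v₁ v * v₂.2 = v.2 * d := by
        rw [hdd]; simp only [dt]; ring
      have hcomp1 : v.1 = a * v₁.1 + b * v₂.1 := by
        rw [ha, hb, div_mul_eq_mul_div, div_mul_eq_mul_div, ← add_div, hid1,
          mul_div_cancel_right₀ _ hdne']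
      have hcomp2 : v.2 = a * v₁.2 + b * v₂.2 := by
        rw [ha, hb, div_mul_eq_mul_div, div_mul_eq_mul_div, ← add_div, hid2,
          mul_div_cancel_right₀ _ hdne']
      clear_value a b d
      have e1 : v.1 ^ p = a ^ p * v₁.1 ^ p + b ^ p * v₂.1 ^ p := by
        rw [hcomp1, frob_add, mul_pow, mul_pow]
      have e2 : v.2 ^ p = a ^ p * v₁.2 ^ p + b ^ p * v₂.2 ^ p := by
        rw [hcomp2, frob_add, mul_pow, mul_pow]
      have e1' : v.1 ^ p = a * v₁.1 ^ p + b * v₂.1 ^ p := by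
        linear_combination hv.1 + g11 * hcomp1 + g12 * hcomp2 - a * hv₁E'.1 - b * hv₂E'.1
      have e2' : v.2 ^ p = a * v₁.2 ^ p + b * v₂.2 ^ p := by
        linear_combination hv.2 + g21 * hcomp1 + g22 * hcomp2 - a * hv₁E'.2 - b * hv₂E'.2
      have hf1 : (a ^ p - a) * v₁.1 ^ p + (b ^ p - b) * v₂.1 ^ p = 0 := by
        linear_combination e1' - e1
      have hf2 : (a ^ p - a) * v₁.2 ^ p + (b ^ p - b) * v₂.2 ^ p = 0 := by
        linear_combination e2' - e2
      have hdp : d ^ p ≠ 0 := pow_ne_zero _ hdne'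
      have hA : a ^ p - a = 0 := by
        have hz : (a ^ p - a) * d ^ p = 0 := by
          rw [hdpe]
          linear_combination v₂.2 ^ p * hf1 - v₂.1 ^ p * hf2
        exact (mul_eq_zero.mp hz).resolve_right hdp
      have hB : b ^ p - b = 0 := by
        have hz : (b ^ p - b) * d ^ p = 0 := by
          rw [hdpe]
          linear_combination v₁.1 ^ p * hf2 - v₁.2 ^ p * hf1
        exact (mul_eq_zero.mp hz).resolve_right hdp
      refine ⟨a, b, hA, hB, ?_⟩
      refine Prod.ext ?_ ?_
      · rw [Prod.fst_add, smul_fst, smul_fst]; exact hcomp1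
      · rw [Prod.snd_add, smul_snd, smul_snd]; exact hcomp2
    choose fa fb h1 h2 h3 using key
    have hinj : Nat.card E ≤ Nat.card (Fx p × Fx p) := by
      apply Nat.card_le_card_of_injective
        (fun v : E => ((⟨fa v.1 v.2, h1 v.1 v.2⟩ : Fx p), (⟨fb v.1 v.2, h2 v.1 v.2⟩ : Fx p)))
      intro x y hxy
      simp only [Prod.mk.injEq, Subtype.mk.injEq] at hxy
      apply Subtype.ext
      rw [h3 x.1 x.2, h3 y.1 y.2, hxy.1, hxy.2]
    calc E.ncard = Nat.card E := (Nat.card_coe_set_eq _).symm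
      _ ≤ Nat.card (Fx p × Fx p) := hinj
      _ = Nat.card (Fx p) * Nat.card (Fx p) := Nat.card_prod _ _
      _ = (Fx p).ncard * (Fx p).ncard := by rw [Nat.card_coe_set_eq]
      _ ≤ p * p := Nat.mul_le_mul (Fx_card p) (Fx_card p)
      _ = p ^ 2 := (sq p).symm

/-- a set orthogonal to two independent vectors has at most `p^2` elements -/
lemma ortho_indep_bound (u₁ u₂ : K p × K p) (hd : dt p u₁ u₂ ≠ 0) (s : Set (K p × K p))
    (hs : ∀ v ∈ s, Bf p u₁ v = 0 ∧ Bf p u₂ v = 0) : s.ncard ≤ p ^ 2 := by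
  set d := dt p u₁ u₂ with hdd
  set g11 := (u₂.2 * u₁.1 ^ p - u₁.2 * u₂.1 ^ p) / d with hg11
  set g12 := (u₁.2 * u₂.2 ^ p - u₂.2 * u₁.2 ^ p) / d with hg12
  set g21 := (u₂.1 * u₁.1 ^ p - u₁.1 * u₂.1 ^ p) / d with hg21
  set g22 := (u₁.1 * u₂.2 ^ p - u₂.1 * u₁.2 ^ p) / d with hg22
  have hsub : s ⊆ {v : K p × K p | v.1 ^ p = g11 * v.1 + g12 * v.2 ∧
      v.2 ^ p = g21 * v.1 + g22 * v.2} := by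
    intro v hv
    obtain ⟨h1, h2⟩ := hs v hv
    simp only [Bf] at h1 h2
    have hd0 : d ≠ 0 := hd
    constructor
    · show v.1 ^ p = g11 * v.1 + g12 * v.2
      rw [hg11, hg12, div_mul_eq_mul_div, div_mul_eq_mul_div, ← add_div,
        eq_div_iff hd0, hdd]
      simp only [dt]
      linear_combination u₂.2 * h1 - u₁.2 * h2
    · show v.2 ^ p = g21 * v.1 + g22 * v.2
      rw [hg21, hg22, div_mul_eq_mul_div, div_mul_eq_mul_div, ← add_div,
        eq_div_iff hd0, hdd]
      simp only [dt]
      linear_combination u₂.1 * h1 - u₁.1 * h2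
  exact le_trans (Set.ncard_le_ncard hsub (Set.toFinite _)) (card_E p _ _ _ _)




lemma swap_ne_zero {w : K p × K p} (hw : w ≠ 0) : ((w.2, w.1) : K p × K p) ≠ 0 := by
  intro h
  rw [Prod.mk.injEq] at h
  exact hw (Prod.ext h.2 h.1)

lemma Pw_eq_swap (w : K p × K p) (hw : w ≠ 0) (hR : Rw p w = 0) :
    Pw p w = (lineA p (w.2, w.1) : Set (K p × K p)) := by
  have hR2 : w.1 ^ p * w.2 - w.1 * w.2 ^ p = 0 := hR
  ext v
  simp only [Pw, Set.mem_setOf_eq, SetLike.mem_coe, mem_lineA, dt, Af, Bb]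
  constructor
  · rintro ⟨h1, h2⟩
    by_cases hw2 : w.2 = 0
    · have hw1 : w.1 ≠ 0 := fun h => hw (Prod.ext h hw2)
      have hv1 : v.1 = 0 := by
        have hz : w.1 * v.1 ^ p = 0 := by rw [hw2] at h1; linear_combination h1
        have := (mul_eq_zero.mp hz).resolve_left hw1
        exact pow_eq_zero_iff (p_ne_zero p) |>.mp this
      rw [hw2, hv1]; ring
    · have key : w.2 ^ p * (w.2 * v.2 - w.1 * v.1) = 0 := by
        linear_combination -w.2 * h2 + v.1 * hR2
      exact (mul_eq_zero.mp key).resolve_left (pow_ne_zero _ hw2)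
  · intro h
    by_cases hw2 : w.2 = 0
    · have hw1 : w.1 ≠ 0 := fun hh => hw (Prod.ext hh hw2)
      have hv1 : v.1 = 0 := by
        have hz : w.1 * v.1 = 0 := by rw [hw2] at h; linear_combination -h
        exact (mul_eq_zero.mp hz).resolve_left hw1
      constructor
      · rw [hv1, hw2]; simp [zero_pow (p_ne_zero p)]
      · rw [hv1, hw2]; simp [zero_pow (p_ne_zero p)]
    · have h2 : w.1 ^ p * v.1 - w.2 ^ p * v.2 = 0 := by
        have hz : w.2 * (w.1 ^ p * v.1 - w.2 ^ p * v.2) = 0 := by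
          linear_combination v.1 * hR2 - w.2 ^ p * h
        exact (mul_eq_zero.mp hz).resolve_left hw2
      refine ⟨?_, h2⟩
      have h' : w.2 * v.2 = w.1 * v.1 := by linear_combination h
      have hfr : w.2 ^ p * v.2 ^ p = w.1 ^ p * v.1 ^ p := by
        have := congrArg (fun x : K p => x ^ p) h'
        simpa [mul_pow] using this
      have hz : w.2 ^ p * (w.1 * v.1 ^ p - w.2 * v.2 ^ p) = 0 := by
        linear_combination -w.2 * hfr - v.1 ^ p * hR2
      exact (mul_eq_zero.mp hz).resolve_left (pow_ne_zero _ hw2)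

lemma Pw_irrat (w : K p × K p) (hR : Rw p w ≠ 0) :
    Pw p w ⊆ {(0 : K p × K p)} := by
  have hR2 : w.1 ^ p * w.2 - w.1 * w.2 ^ p ≠ 0 := hR
  have hw1 : w.1 ≠ 0 := by
    intro h; apply hR2; rw [h, zero_pow (p_ne_zero p)]; ring
  have hw2 : w.2 ≠ 0 := by
    intro h; apply hR2; rw [h, zero_pow (p_ne_zero p)]; ring
  have hkey : w.1 * (w.2 ^ p) ^ p - (w.1 ^ p) ^ p * w.2 ≠ 0 := by
    intro h
    apply hR2
    have h' : w.1 * (w.2 ^ p) ^ p = (w.1 ^ p) ^ p * w.2 := by linear_combination h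
    have := congrArg (fun x : K p => x ^ p) h'
    simp only [mul_pow, frob_frob_frob] at this
    linear_combination this
  rintro v ⟨h1, h2⟩
  simp only [Af, Bb] at h1 h2
  have e : (w.2 ^ p * v.2) ^ p = (w.1 ^ p * v.1) ^ p := by
    have h2' : w.2 ^ p * v.2 = w.1 ^ p * v.1 := by linear_combination -h2
    rw [h2']
  rw [mul_pow, mul_pow] at e
  have hz : v.1 ^ p * (w.1 * (w.2 ^ p) ^ p - (w.1 ^ p) ^ p * w.2) = 0 := by
    linear_combination (w.2 ^ p) ^ p * h1 + w.2 * e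
  have hv1 : v.1 = 0 := by
    have := (mul_eq_zero.mp hz).resolve_right hkey
    exact pow_eq_zero_iff (p_ne_zero p) |>.mp this
  have hv2 : v.2 = 0 := by
    have hz2 : w.2 ^ p * v.2 = 0 := by rw [hv1] at h2; linear_combination -h2
    exact (mul_eq_zero.mp hz2).resolve_left (pow_ne_zero _ hw2)
  simp [Prod.ext_iff, hv1, hv2]

lemma card_Pw_rat (w : K p × K p) (hw : w ≠ 0) (hR : Rw p w = 0) :
    (Pw p w).ncard = p ^ 3 := by
  rw [Pw_eq_swap p w hw hR]
  exact card_lineA p (swap_ne_zero p hw)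

lemma card_Pw_le (w : K p × K p) (hw : w ≠ 0) : (Pw p w).ncard ≤ p ^ 3 := by
  by_cases hR : Rw p w = 0
  · rw [card_Pw_rat p w hw hR]
  · calc (Pw p w).ncard ≤ ({(0 : K p × K p)} : Set _).ncard :=
        Set.ncard_le_ncard (Pw_irrat p w hR) (Set.toFinite _)
    _ = 1 := Set.ncard_singleton _
    _ ≤ p ^ 3 := Nat.one_le_pow _ _ (Fact.out : p.Prime).pos

lemma perp_line_sub (w : K p × K p) (U : AddSubgroup (K p × K p))
    (hU : ∀ u ∈ U, ∃ c : K p, u = c • w) :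
    Pw p w ⊆ (perp p U : Set (K p × K p)) := by
  rintro v ⟨h1, h2⟩ u hu
  obtain ⟨c, rfl⟩ := hU u hu
  rw [Bf_smul_left, h1, h2, mul_zero, mul_zero, sub_zero]

lemma card_le_fix (w : K p × K p) (hw : w ≠ 0) (s : Set (K p × K p))
    (hs : ∀ v ∈ s, ∃ c : K p, c ^ p = c ∧ v = c • w) : s.ncard ≤ p := by
  classical
  have key : ∀ v : s, ∃ c : K p, c ∈ Fx p ∧ (v : K p × K p) = c • w := by
    rintro ⟨v, hv⟩
    obtain ⟨c, hc1, hc2⟩ := hs v hv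
    exact ⟨c, by simp [Fx, sub_eq_zero, hc1], hc2⟩
  choose f hf1 hf2 using key
  have : Nat.card s ≤ Nat.card (Fx p) := by
    apply Nat.card_le_card_of_injective (fun v : s => (⟨f v, hf1 v⟩ : Fx p))
    intro x y hxy
    simp only [Subtype.mk.injEq] at hxy
    apply Subtype.ext
    rw [hf2 x, hf2 y, hxy]
  calc s.ncard = Nat.card s := (Nat.card_coe_set_eq _).symm
    _ ≤ Nat.card (Fx p) := this
    _ = (Fx p).ncard := Nat.card_coe_set_eq _
    _ ≤ p := Fx_card p

lemma card_addsub_le (U : AddSubgroup (K p × K p)) : Nat.card U ≤ p ^ 6 := by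
  rw [card_subgroup_eq_ncard, ← card_V p, ← Set.ncard_univ]
  exact Set.ncard_le_ncard (Set.subset_univ _) (Set.toFinite _)

lemma perp_bot : perp p ⊥ = (⊤ : AddSubgroup (K p × K p)) := by
  ext v
  simp only [mem_perp, AddSubgroup.mem_bot, AddSubgroup.mem_top, iff_true]
  rintro u rfl
  exact Bf_zero_left p v

lemma card_top_addsub : Nat.card (⊤ : AddSubgroup (K p × K p)) = p ^ 6 := by
  rw [Nat.card_congr AddSubgroup.topEquiv.toEquiv, card_V]

lemma pow_lt_pow6 {k : ℕ} (h : k < 6) : p ^ k < p ^ 6 :=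
  Nat.pow_lt_pow_right (one_lt_p p) h

/-- THE MAIN THEOREM: measure bound and classification of equality cases. -/
theorem main_bound (U : AddSubgroup (K p × K p)) :
    Nat.card U * Nat.card (perp p U) ≤ p ^ 6 ∧
    (Nat.card U * Nat.card (perp p U) = p ^ 6 →
      U = ⊥ ∨ U = ⊤ ∨ ∃ w : K p × K p, w ≠ 0 ∧ Rw p w = 0 ∧ U = lineA p w) := by
  classical
  by_cases hUbot : U = ⊥
  · subst hUbot
    rw [perp_bot, AddSubgroup.card_bot, card_top_addsub, one_mul]
    exact ⟨le_refl _, fun _ => Or.inl rfl⟩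
  obtain ⟨u₀, hu₀U, hu₀0⟩ : ∃ u ∈ U, u ≠ (0 : K p × K p) := by
    by_contra h
    push_neg at h
    apply hUbot
    ext v
    simp only [AddSubgroup.mem_bot]
    exact ⟨fun hv => h v hv, fun hv => hv ▸ U.zero_mem⟩
  have ha1 : (U : Set (K p × K p)).ncard = Nat.card U := (card_subgroup_eq_ncard p U).symm
  have hb1 : ((perp p U : Set (K p × K p))).ncard = Nat.card (perp p U) :=
    (card_subgroup_eq_ncard p _).symm
  by_cases hind : ∃ u₁ ∈ U, ∃ u₂ ∈ U, dt p u₁ u₂ ≠ 0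
  · -- case II : U contains two independent vectors
    obtain ⟨u₁, hu₁, u₂, hu₂, hd⟩ := hind
    have hb2 : Nat.card (perp p U) ≤ p ^ 2 := by
      rw [← hb1]
      exact ortho_indep_bound p u₁ u₂ hd _ (fun v hv => ⟨hv u₁ hu₁, hv u₂ hu₂⟩)
    by_cases hperpbot : perp p U = ⊥
    · rw [hperpbot, AddSubgroup.card_bot, mul_one]
      refine ⟨card_addsub_le p U, fun heq => ?_⟩
      refine Or.inr (Or.inl ?_)
      apply AddSubgroup.eq_top_of_card_eq
      rw [heq, card_V]
    · obtain ⟨v₀, hv₀U, hv₀0⟩ : ∃ v ∈ perp p U, v ≠ (0 : K p × K p) := by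
        by_contra h
        push_neg at h
        apply hperpbot
        ext v
        simp only [AddSubgroup.mem_bot]
        exact ⟨fun hv => h v hv, fun hv => hv ▸ (perp p U).zero_mem⟩
      have ha4 : Nat.card U ≤ p ^ 4 := by
        rw [← ha1]
        refine le_trans (Set.ncard_le_ncard ?_ (Set.toFinite _)) (card_ker_single p hv₀0)
        intro u hu
        have := hv₀U u hu
        show Bf p v₀ u = 0
        rw [Bf_skew, this, neg_zero]
      by_cases hble : Nat.card (perp p U) ≤ p
      · constructor
        · calc Nat.card U * Nat.card (perp p U) ≤ p ^ 4 * p := Nat.mul_le_mul ha4 hble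
            _ = p ^ 5 := by ring
            _ ≤ p ^ 6 := le_of_lt (pow_lt_pow6 p (by norm_num))
        · intro heq
          exfalso
          have : p ^ 6 ≤ p ^ 5 := by
            rw [← heq]
            calc Nat.card U * Nat.card (perp p U) ≤ p ^ 4 * p := Nat.mul_le_mul ha4 hble
              _ = p ^ 5 := by ring
          exact absurd this (not_le.mpr (pow_lt_pow6 p (by norm_num)))
      · push_neg at hble
        have ha_small : Nat.card U ≤ p ^ 3 := by
          by_cases hBind : ∃ v₁ ∈ perp p U, ∃ v₂ ∈ perp p U, dt p v₁ v₂ ≠ 0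
          · obtain ⟨v₁, hv₁, v₂, hv₂, hdB⟩ := hBind
            rw [← ha1]
            refine le_trans (ortho_indep_bound p v₁ v₂ hdB _ (fun u hu => ?_)) ?_
            · constructor
              · rw [Bf_skew, hv₁ u hu, neg_zero]
              · rw [Bf_skew, hv₂ u hu, neg_zero]
            · exact le_of_lt (Nat.pow_lt_pow_right (one_lt_p p) (by norm_num))
          · push_neg at hBind
            by_cases hfixB : ∀ v ∈ perp p U, ∃ c : K p, c ^ p = c ∧ v = c • v₀
            · exfalso
              have : Nat.card (perp p U) ≤ p := by
                rw [← hb1]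
                exact card_le_fix p v₀ hv₀0 _ hfixB
              omega
            · push_neg at hfixB
              obtain ⟨v', hv'mem, hv'⟩ := hfixB
              obtain ⟨c', hc'eq⟩ :=
                dep_scalar p v₀ v' hv₀0 (hBind v₀ hv₀U v' hv'mem)
              have hc' : c' ^ p ≠ c' := fun h => (hv' c' h) hc'eq
              rw [← ha1]
              refine le_trans (Set.ncard_le_ncard ?_ (Set.toFinite _)) (card_Pw_le p v₀ hv₀0)
              intro u hu
              apply ortho_pair p v₀ u c' hc'
              · rw [Bf_skew, hv₀U u hu, neg_zero]
              · rw [← hc'eq, Bf_skew, hv'mem u hu, neg_zero]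
        constructor
        · calc Nat.card U * Nat.card (perp p U) ≤ p ^ 3 * p ^ 2 :=
              Nat.mul_le_mul ha_small hb2
            _ = p ^ 5 := by ring
            _ ≤ p ^ 6 := le_of_lt (pow_lt_pow6 p (by norm_num))
        · intro heq
          exfalso
          have : p ^ 6 ≤ p ^ 5 := by
            rw [← heq]
            calc Nat.card U * Nat.card (perp p U) ≤ p ^ 3 * p ^ 2 :=
                Nat.mul_le_mul ha_small hb2
              _ = p ^ 5 := by ring
          exact absurd this (not_le.mpr (pow_lt_pow6 p (by norm_num)))
  · -- case : U is contained in the line through u₀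
    push_neg at hind
    have hline : ∀ u ∈ U, ∃ c : K p, u = c • u₀ :=
      fun u hu => dep_scalar p u₀ u hu₀0 (hind u₀ hu₀U u hu)
    have hbker : Nat.card (perp p U) ≤ p ^ 4 := by
      rw [← hb1]
      refine le_trans (Set.ncard_le_ncard ?_ (Set.toFinite _)) (card_ker_single p hu₀0)
      intro v hv
      exact hv u₀ hu₀U
    by_cases hfix : ∀ u ∈ U, ∃ c : K p, c ^ p = c ∧ u = c • u₀
    · have ha_p : Nat.card U ≤ p := by
        rw [← ha1]
        exact card_le_fix p u₀ hu₀0 _ hfix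
      constructor
      · calc Nat.card U * Nat.card (perp p U) ≤ p * p ^ 4 := Nat.mul_le_mul ha_p hbker
          _ = p ^ 5 := by ring
          _ ≤ p ^ 6 := le_of_lt (pow_lt_pow6 p (by norm_num))
      · intro heq
        exfalso
        have : p ^ 6 ≤ p ^ 5 := by
          rw [← heq]
          calc Nat.card U * Nat.card (perp p U) ≤ p * p ^ 4 := Nat.mul_le_mul ha_p hbker
            _ = p ^ 5 := by ring
        exact absurd this (not_le.mpr (pow_lt_pow6 p (by norm_num)))
    · push_neg at hfix
      obtain ⟨u', hu'U, hu'⟩ := hfix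
      obtain ⟨c', hc'eq⟩ := hline u' hu'U
      have hc' : c' ^ p ≠ c' := fun h => (hu' c' h) hc'eq
      have hPeq : (perp p U : Set (K p × K p)) = Pw p u₀ := by
        apply subset_antisymm
        · intro v hv
          apply ortho_pair p u₀ v c' hc'
          · exact hv u₀ hu₀U
          · rw [← hc'eq]; exact hv u' hu'U
        · exact perp_line_sub p u₀ U hline
      have haline : (U : Set (K p × K p)) ⊆ (lineA p u₀ : Set (K p × K p)) := by
        intro u hu
        obtain ⟨c, rfl⟩ := hline u hu
        exact smul_mem_lineA p c u₀
      have ha3 : Nat.card U ≤ p ^ 3 := by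
        rw [← ha1]
        refine le_trans (Set.ncard_le_ncard haline (Set.toFinite _)) ?_
        rw [card_lineA p hu₀0]
      by_cases hRz : Rw p u₀ = 0
      · have hb3 : Nat.card (perp p U) = p ^ 3 := by
          rw [← hb1, hPeq]
          exact card_Pw_rat p u₀ hu₀0 hRz
        constructor
        · rw [hb3]
          calc Nat.card U * p ^ 3 ≤ p ^ 3 * p ^ 3 := Nat.mul_le_mul_right _ ha3
            _ = p ^ 6 := by ring
        · intro heq
          rw [hb3] at heq
          have ha3' : Nat.card U = p ^ 3 := by
            have : Nat.card U * p ^ 3 = p ^ 3 * p ^ 3 := by rw [heq]; ring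
            exact Nat.eq_of_mul_eq_mul_right (pow_pos (Fact.out : p.Prime).pos 3) this
          refine Or.inr (Or.inr ⟨u₀, hu₀0, hRz, ?_⟩)
          apply SetLike.ext'
          apply Set.eq_of_subset_of_ncard_le haline ?_ (Set.toFinite _)
          rw [card_lineA p hu₀0, ha1, ha3']
      · have hb_one : Nat.card (perp p U) ≤ 1 := by
          rw [← hb1, hPeq]
          calc (Pw p u₀).ncard ≤ ({(0 : K p × K p)} : Set _).ncard :=
              Set.ncard_le_ncard (Pw_irrat p u₀ hRz) (Set.toFinite _)
            _ = 1 := Set.ncard_singleton _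
        constructor
        · calc Nat.card U * Nat.card (perp p U) ≤ p ^ 3 * 1 := Nat.mul_le_mul ha3 hb_one
            _ = p ^ 3 := by ring
            _ ≤ p ^ 6 := le_of_lt (pow_lt_pow6 p (by norm_num))
        · intro heq
          exfalso
          have : p ^ 6 ≤ p ^ 3 := by
            rw [← heq]
            calc Nat.card U * Nat.card (perp p U) ≤ p ^ 3 * 1 := Nat.mul_le_mul ha3 hb_one
              _ = p ^ 3 := by ring
          exact absurd this (not_le.mpr (pow_lt_pow6 p (by norm_num)))




@[ext] structure GrpY (p : ℕ) [Fact p.Prime] where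
  x : K p
  y : K p
  z : K p

def mul' (g h : GrpY p) : GrpY p :=
  ⟨g.x + h.x, g.y + h.y, g.z + h.z + (g.x * h.x ^ p - g.y * h.y ^ p)⟩

def inv' (g : GrpY p) : GrpY p :=
  ⟨-g.x, -g.y, -g.z + (g.x * g.x ^ p - g.y * g.y ^ p)⟩

instance : Group (GrpY p) where
  mul := mul' p
  one := ⟨0, 0, 0⟩
  inv := inv' p
  mul_assoc a b c := by
    show mul' p (mul' p a b) c = mul' p a (mul' p b c)
    simp only [mul']
    ext
    · dsimp; ring
    · dsimp; ring
    · dsimp; rw [frob_add, frob_add]; ring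
  one_mul a := by
    show mul' p ⟨0, 0, 0⟩ a = a
    simp only [mul']
    ext
    · dsimp; ring
    · dsimp; ring
    · dsimp; ring
  mul_one a := by
    show mul' p a ⟨0, 0, 0⟩ = a
    simp only [mul']
    ext
    · dsimp; ring
    · dsimp; ring
    · dsimp; rw [zero_pow (p_ne_zero p)]; ring
  inv_mul_cancel a := by
    show mul' p (inv' p a) a = ⟨0, 0, 0⟩
    simp only [mul', inv']
    ext
    · dsimp; ring
    · dsimp; ring
    · dsimp; ring

lemma mul_def (g h : GrpY p) : g * h = mul' p g h := rfl
lemma one_def : (1 : GrpY p) = ⟨0, 0, 0⟩ := rfl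

def eqv : GrpY p ≃ (K p × K p × K p) where
  toFun g := (g.x, g.y, g.z)
  invFun t := ⟨t.1, t.2.1, t.2.2⟩
  left_inv g := rfl
  right_inv t := rfl

instance : Finite (GrpY p) := Finite.of_equiv _ (eqv p).symm

lemma card_GrpY : Nat.card (GrpY p) = p ^ 9 := by
  rw [Nat.card_congr (eqv p), Nat.card_prod, Nat.card_prod, card_K]
  ring

lemma mul_comm_iff (g h : GrpY p) :
    g * h = h * g ↔ Bf p (g.x, g.y) (h.x, h.y) = 0 := by
  rw [mul_def, mul_def]
  constructor
  · intro hgh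
    have hz := congrArg GrpY.z hgh
    dsimp [mul'] at hz
    show g.x * h.x ^ p - g.x ^ p * h.x - (g.y * h.y ^ p - g.y ^ p * h.y) = 0
    linear_combination hz
  · intro hB
    have hB' : g.x * h.x ^ p - g.x ^ p * h.x - (g.y * h.y ^ p - g.y ^ p * h.y) = 0 := hB
    simp only [mul']
    ext
    · dsimp; ring
    · dsimp; ring
    · dsimp; linear_combination hB'

def GU (U : AddSubgroup (K p × K p)) : Subgroup (GrpY p) where
  carrier := {g | (g.x, g.y) ∈ U}
  mul_mem' := by
    intro a b ha hb
    show ((a * b).x, (a * b).y) ∈ U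
    have : ((a * b).x, (a * b).y) = (a.x, a.y) + (b.x, b.y) := rfl
    rw [this]
    exact U.add_mem ha hb
  one_mem' := by
    show ((0 : K p), (0 : K p)) ∈ U
    exact U.zero_mem
  inv_mem' := by
    intro a ha
    show ((a⁻¹).x, (a⁻¹).y) ∈ U
    have : ((a⁻¹).x, (a⁻¹).y) = -(a.x, a.y) := rfl
    rw [this]
    exact U.neg_mem ha

lemma mem_GU {U : AddSubgroup (K p × K p)} {g : GrpY p} :
    g ∈ GU p U ↔ (g.x, g.y) ∈ U := Iff.rfl

def cardEquiv (U : AddSubgroup (K p × K p)) : ↥(GU p U) ≃ (↥U × K p) where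
  toFun g := (⟨(g.1.x, g.1.y), g.2⟩, g.1.z)
  invFun w := ⟨⟨w.1.1.1, w.1.1.2, w.2⟩, w.1.2⟩
  left_inv g := rfl
  right_inv w := rfl

lemma card_GU (U : AddSubgroup (K p × K p)) :
    Nat.card (GU p U) = Nat.card U * p ^ 3 := by
  rw [Nat.card_congr (cardEquiv p U), Nat.card_prod, card_K]

lemma centralizer_GU (U : AddSubgroup (K p × K p)) :
    Subgroup.centralizer ((GU p U : Subgroup (GrpY p)) : Set (GrpY p)) =
      GU p (perp p U) := by
  ext g
  rw [Subgroup.mem_centralizer_iff]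
  constructor
  · intro h
    show (g.x, g.y) ∈ perp p U
    intro u hu
    have hm : (⟨u.1, u.2, 0⟩ : GrpY p) ∈ GU p U := by
      show (u.1, u.2) ∈ U
      simpa using hu
    have := h _ hm
    rw [mul_comm_iff] at this
    exact this
  · intro hg h hh
    rw [mul_comm_iff]
    exact hg (h.x, h.y) hh

lemma GU_top : GU p (⊤ : AddSubgroup (K p × K p)) = ⊤ := by
  ext g; simp [mem_GU]

lemma perp_top : perp p (⊤ : AddSubgroup (K p × K p)) = ⊥ := by
  obtain ⟨τ, hτ⟩ := exists_nonfix p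
  ext v
  simp only [mem_perp, AddSubgroup.mem_bot]
  constructor
  · intro hv
    have h1 : Bf p (1, 0) v = 0 := hv (1, 0) trivial
    have h2 : Bf p (τ, 0) v = 0 := hv (τ, 0) trivial
    have h3 : Bf p (0, 1) v = 0 := hv (0, 1) trivial
    have h4 : Bf p (0, τ) v = 0 := hv (0, τ) trivial
    simp only [Bf, one_pow, zero_pow (p_ne_zero p), zero_mul, mul_zero, sub_zero,
      one_mul, sub_self, sub_zero] at h1 h2 h3 h4
    have hfix1 : v.1 ^ p = v.1 := by linear_combination h1
    have hfix2 : v.2 ^ p = v.2 := by linear_combination -h3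
    have hv1 : v.1 = 0 := by
      have : v.1 * (τ - τ ^ p) = 0 := by
        rw [hfix1] at h2
        linear_combination h2
      rcases mul_eq_zero.mp this with h | h
      · exact h
      · exact absurd (by linear_combination -h : τ ^ p = τ) hτ
    have hv2 : v.2 = 0 := by
      have : v.2 * (τ - τ ^ p) = 0 := by
        rw [hfix2] at h4
        linear_combination -h4
      rcases mul_eq_zero.mp this with h | h
      · exact h
      · exact absurd (by linear_combination -h : τ ^ p = τ) hτ
    exact Prod.ext hv1 hv2
  · rintro rfl
    intro u _
    exact Bf_zero_right p u

lemma center_eq : Subgroup.center (GrpY p) = GU p ⊥ := by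
  rw [← Subgroup.centralizer_univ]
  have huniv : (Set.univ : Set (GrpY p)) = ((GU p ⊤ : Subgroup (GrpY p)) : Set (GrpY p)) := by
    ext g; simp [mem_GU]
  rw [huniv, centralizer_GU, perp_top]

lemma card_bot_addsub : Nat.card (⊥ : AddSubgroup (K p × K p)) = 1 := by
  simp

lemma card_center : Nat.card (Subgroup.center (GrpY p)) = p ^ 3 := by
  rw [center_eq, card_GU, card_bot_addsub, one_mul]

def U_of (H : Subgroup (GrpY p)) : AddSubgroup (K p × K p) where
  carrier := {v | ∃ c : K p, (⟨v.1, v.2, c⟩ : GrpY p) ∈ H}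
  add_mem' := by
    rintro a b ⟨c, hc⟩ ⟨d, hd⟩
    exact ⟨_, H.mul_mem hc hd⟩
  zero_mem' := ⟨0, H.one_mem⟩
  neg_mem' := by
    rintro a ⟨c, hc⟩
    exact ⟨_, H.inv_mem hc⟩

lemma GU_U_of (H : Subgroup (GrpY p)) (hZ : GU p (⊥ : AddSubgroup (K p × K p)) ≤ H) :
    GU p (U_of p H) = H := by
  ext g
  constructor
  · rintro ⟨c, hc⟩
    have hw : (⟨0, 0, g.z - c⟩ : GrpY p) ∈ H := by
      apply hZ
      show ((0 : K p), (0 : K p)) ∈ (⊥ : AddSubgroup (K p × K p))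
      simp
    have hmem := H.mul_mem hc hw
    have hgeq : (⟨g.x, g.y, c⟩ : GrpY p) * ⟨0, 0, g.z - c⟩ = g := by
      rw [mul_def]
      simp only [mul']
      ext
      · dsimp; ring
      · dsimp; ring
      · dsimp; rw [zero_pow (p_ne_zero p)]; ring
    rwa [hgeq] at hmem
  · intro hg
    exact ⟨g.z, hg⟩

lemma GU_le_iff {U U' : AddSubgroup (K p × K p)} : GU p U ≤ GU p U' ↔ U ≤ U' := by
  constructor
  · intro h u hu
    have : (⟨u.1, u.2, 0⟩ : GrpY p) ∈ GU p U := by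
      show (u.1, u.2) ∈ U; simpa using hu
    have := h this
    rw [mem_GU] at this
    simpa using this
  · intro h g hg
    exact h hg

lemma GU_inj {U U' : AddSubgroup (K p × K p)} (h : GU p U = GU p U') : U = U' :=
  le_antisymm ((GU_le_iff p).mp h.le) ((GU_le_iff p).mp h.ge)




lemma CDmeasure_GU (U : AddSubgroup (K p × K p)) :
    CDmeasure (GU p U) = (Nat.card U * Nat.card (perp p U)) * p ^ 6 := by
  rw [CDmeasure, card_GU, centralizer_GU, card_GU]
  ring

lemma centralizer_sup_center (Kk : Subgroup (GrpY p)) :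
    Subgroup.centralizer ((Kk ⊔ GU p ⊥ : Subgroup (GrpY p)) : Set (GrpY p)) =
      Subgroup.centralizer (Kk : Set (GrpY p)) := by
  apply le_antisymm
  · apply Subgroup.centralizer_le
    intro x hx
    exact SetLike.le_def.mp le_sup_left hx
  · intro g hg
    rw [Subgroup.mem_centralizer_iff]
    intro h hh
    rw [SetLike.mem_coe, Subgroup.sup_eq_closure] at hh
    induction hh using Subgroup.closure_induction with
    | mem x hx =>
        rcases hx with hx | hx
        · exact Subgroup.mem_centralizer_iff.mp hg x hx
        · rw [mul_comm_iff]
          have hx0 : (x.x, x.y) ∈ (⊥ : AddSubgroup (K p × K p)) := hx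
          rw [AddSubgroup.mem_bot] at hx0
          rw [hx0]
          exact Bf_zero_left p _
    | one => rw [one_mul, mul_one]
    | mul a b _ _ ha hb =>
        rw [mul_assoc, hb, ← mul_assoc, ha, mul_assoc]
    | inv a _ ha =>
        have : Commute a g := ha
        exact this.inv_left
  
lemma max_measure (Kk : Subgroup (GrpY p)) : CDmeasure Kk ≤ p ^ 12 := by
  have hZ : GU p ⊥ ≤ Kk ⊔ GU p ⊥ := le_sup_right
  have hle : CDmeasure Kk ≤ CDmeasure (Kk ⊔ GU p ⊥) := by
    rw [CDmeasure, CDmeasure, centralizer_sup_center]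
    exact Nat.mul_le_mul_right _ (Subgroup.card_le_of_le le_sup_left)
  calc CDmeasure Kk ≤ CDmeasure (Kk ⊔ GU p ⊥) := hle
    _ = (Nat.card (U_of p (Kk ⊔ GU p ⊥)) *
          Nat.card (perp p (U_of p (Kk ⊔ GU p ⊥)))) * p ^ 6 := by
        conv_lhs => rw [← GU_U_of p _ hZ]
        rw [CDmeasure_GU]
    _ ≤ p ^ 6 * p ^ 6 :=
        Nat.mul_le_mul_right _ (main_bound p (U_of p (Kk ⊔ GU p ⊥))).1
    _ = p ^ 12 := by ring

lemma centralizer_center :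
    Subgroup.centralizer ((Subgroup.center (GrpY p)) : Set (GrpY p)) = ⊤ := by
  ext g
  simp only [Subgroup.mem_top, iff_true]
  rw [Subgroup.mem_centralizer_iff]
  intro h hh
  exact (Subgroup.mem_center_iff.mp hh g).symm

lemma card_top_grp : Nat.card (⊤ : Subgroup (GrpY p)) = p ^ 9 := by
  rw [Nat.card_congr Subgroup.topEquiv.toEquiv, card_GrpY]

lemma measure_center : CDmeasure (Subgroup.center (GrpY p)) = p ^ 12 := by
  rw [CDmeasure, centralizer_center, card_center, card_top_grp]
  ring

lemma measure_top : CDmeasure (⊤ : Subgroup (GrpY p)) = p ^ 12 := by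
  rw [CDmeasure, Subgroup.coe_top, Subgroup.centralizer_univ, card_center, card_top_grp]
  ring

lemma inCD_iff_measure (Kk : Subgroup (GrpY p)) :
    inCD Kk ↔ CDmeasure Kk = p ^ 12 := by
  constructor
  · intro h
    refine le_antisymm (max_measure p Kk) ?_
    have := h ⊤
    rwa [measure_top] at this
  · intro h K'
    rw [h]
    exact max_measure p K'

def wn : Option (ZMod p) → K p × K p
  | some n => (algebraMap (ZMod p) (K p) n, 1)
  | none => (1, 0)

lemma wn_ne_zero (o : Option (ZMod p)) : wn p o ≠ 0 := by
  cases o with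
  | some n =>
      intro h
      have := congrArg Prod.snd h
      simp [wn] at this
  | none =>
      intro h
      have := congrArg Prod.fst h
      simp [wn] at this

lemma Rw_wn (o : Option (ZMod p)) : Rw p (wn p o) = 0 := by
  cases o with
  | some n =>
      show (algebraMap (ZMod p) (K p) n) ^ p * 1 - (algebraMap (ZMod p) (K p) n) * 1 ^ p = 0
      rw [← map_pow, ZMod.pow_card]
      ring
  | none =>
      show (1 : K p) ^ p * 0 - 1 * (0 : K p) ^ p = 0
      rw [zero_pow (p_ne_zero p)]
      ring

lemma self_mem_lineA (w : K p × K p) : w ∈ lineA p w := by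
  show dt p w w = 0
  simp [dt]; ring

lemma line_normalize (w : K p × K p) (hw : w ≠ 0) (hR : Rw p w = 0) :
    ∃ o : Option (ZMod p), lineA p w = lineA p (wn p o) := by
  have hR2 : w.1 ^ p * w.2 - w.1 * w.2 ^ p = 0 := hR
  by_cases hw2 : w.2 = 0
  · refine ⟨none, ?_⟩
    have hw1 : w.1 ≠ 0 := fun h => hw (Prod.ext h hw2)
    ext v
    show dt p w v = 0 ↔ dt p (wn p none) v = 0
    simp only [dt, wn, hw2]
    constructor
    · intro h
      have : w.1 * v.2 = 0 := by linear_combination h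
      have := (mul_eq_zero.mp this).resolve_left hw1
      rw [this]; ring
    · intro h
      have hv2 : v.2 = 0 := by linear_combination h
      rw [hv2]; ring
  · have hufix : (w.1 / w.2) ^ p = w.1 / w.2 := by
      rw [div_pow]
      rw [div_eq_div_iff (pow_ne_zero _ hw2) hw2]
      linear_combination hR2
    obtain ⟨n, hn⟩ := fix_mem_range p hufix
    refine ⟨some n, ?_⟩
    ext v
    show dt p w v = 0 ↔ dt p (wn p (some n)) v = 0
    simp only [dt, wn, hn]
    have key : w.2 * (w.1 / w.2 * v.2 - 1 * v.1) = w.1 * v.2 - w.2 * v.1 := by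
      field_simp
    constructor
    · intro h
      have hz : w.2 * (w.1 / w.2 * v.2 - 1 * v.1) = 0 := by rw [key, h]
      exact (mul_eq_zero.mp hz).resolve_left hw2
    · intro h
      rw [← key, h, mul_zero]

lemma perp_lineA (w : K p × K p) (hw : w ≠ 0) :
    (perp p (lineA p w) : Set (K p × K p)) = Pw p w := by
  obtain ⟨τ, hτ⟩ := exists_nonfix p
  apply subset_antisymm
  · intro v hv
    apply ortho_pair p w v τ hτ
    · exact hv w (self_mem_lineA p w)
    · exact hv _ (smul_mem_lineA p τ w)
  · apply perp_line_sub
    intro u hu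
    exact dep_scalar p w u hw hu

lemma measure_atom (o : Option (ZMod p)) :
    CDmeasure (GU p (lineA p (wn p o))) = p ^ 12 := by
  rw [CDmeasure_GU]
  have h1 : Nat.card (lineA p (wn p o)) = p ^ 3 := by
    rw [card_subgroup_eq_ncard, card_lineA p (wn_ne_zero p o)]
  have h2 : Nat.card (perp p (lineA p (wn p o))) = p ^ 3 := by
    rw [card_subgroup_eq_ncard, perp_lineA p _ (wn_ne_zero p o),
      card_Pw_rat p _ (wn_ne_zero p o) (Rw_wn p o)]
  rw [h1, h2]
  ring

lemma card_lt_of_lt {H H' : Subgroup (GrpY p)} (h : H < H') :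
    Nat.card H < Nat.card H' := by
  have h1 : (H : Set (GrpY p)) ⊂ (H' : Set (GrpY p)) := by
    exact_mod_cast h
  calc Nat.card H = (H : Set (GrpY p)).ncard := Nat.card_coe_set_eq _
    _ < (H' : Set (GrpY p)).ncard := Set.ncard_lt_ncard h1 (Set.toFinite _)
    _ = Nat.card H' := (Nat.card_coe_set_eq _).symm

theorem CD_classify (Kk : Subgroup (GrpY p)) :
    inCD Kk ↔ (Kk = Subgroup.center (GrpY p) ∨ Kk = ⊤ ∨
      ∃ o : Option (ZMod p), Kk = GU p (lineA p (wn p o))) := by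
  rw [inCD_iff_measure]
  constructor
  · intro h12
    have hZle : GU p ⊥ ≤ Kk := by
      by_contra hnot
      have hlt : Kk < Kk ⊔ GU p ⊥ := by
        refine lt_of_le_of_ne le_sup_left (fun he => hnot ?_)
        rw [he]
        exact le_sup_right
      have hcard : Nat.card Kk < Nat.card ↥(Kk ⊔ GU p ⊥) := card_lt_of_lt p hlt
      have hCpos : 0 < Nat.card (Subgroup.centralizer (Kk : Set (GrpY p))) :=
        Nat.card_pos
      have hstrict : CDmeasure Kk < CDmeasure (Kk ⊔ GU p ⊥) := by
        rw [CDmeasure, CDmeasure, centralizer_sup_center]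
        exact (Nat.mul_lt_mul_right hCpos).mpr hcard
      have := max_measure p (Kk ⊔ GU p ⊥)
      omega
    have hKeq : GU p (U_of p Kk) = Kk := GU_U_of p Kk hZle
    have hmeas : (Nat.card (U_of p Kk) * Nat.card (perp p (U_of p Kk))) * p ^ 6 = p ^ 12 := by
      rw [← CDmeasure_GU, hKeq, h12]
    have hprod : Nat.card (U_of p Kk) * Nat.card (perp p (U_of p Kk)) = p ^ 6 := by
      have hp6 : 0 < p ^ 6 := pow_pos (Fact.out : p.Prime).pos 6
      apply Nat.eq_of_mul_eq_mul_right hp6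
      rw [hmeas]; ring
    rcases (main_bound p (U_of p Kk)).2 hprod with hU | hU | ⟨w, hw0, hwR, hU⟩
    · left
      rw [← hKeq, hU, center_eq]
    · right; left
      rw [← hKeq, hU, GU_top]
    · right; right
      obtain ⟨o, ho⟩ := line_normalize p w hw0 hwR
      exact ⟨o, by rw [← hKeq, hU, ho]⟩
  · rintro (rfl | rfl | ⟨o, rfl⟩)
    · exact measure_center p
    · exact measure_top p
    · exact measure_atom p o




abbrev atomf (o : Option (ZMod p)) : Subgroup (GrpY p) := GU p (lineA p (wn p o))

lemma line_le_eq {o o' : Option (ZMod p)}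
    (h : lineA p (wn p o) ≤ lineA p (wn p o')) : o = o' := by
  have hmem : wn p o ∈ lineA p (wn p o') := h (self_mem_lineA p _)
  have hdt : dt p (wn p o') (wn p o) = 0 := hmem
  cases o with
  | some n =>
      cases o' with
      | some n' =>
          have : algebraMap (ZMod p) (K p) n' * 1 - 1 * algebraMap (ZMod p) (K p) n = 0 := hdt
          have heq : algebraMap (ZMod p) (K p) n' = algebraMap (ZMod p) (K p) n := by
            linear_combination this
          have := (algebraMap (ZMod p) (K p)).injective heq
          rw [this]
      | none =>
          exfalso
          have : (1 : K p) * 1 - 0 * algebraMap (ZMod p) (K p) n = 0 := hdt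
          simp at this
  | none =>
      cases o' with
      | some n' =>
          exfalso
          have : algebraMap (ZMod p) (K p) n' * 0 - 1 * 1 = 0 := hdt
          simp at this
      | none => rfl

lemma atomf_inj : Function.Injective (atomf p) := by
  intro o o' h
  have h' := GU_inj p h
  exact line_le_eq p h'.le

lemma lineA_wn_ne_top (o : Option (ZMod p)) : lineA p (wn p o) ≠ ⊤ := by
  cases o with
  | some n =>
      intro h
      have hm : ((1 : K p), (0 : K p)) ∈ lineA p (wn p (some n)) := by
        rw [h]; trivial
      have : algebraMap (ZMod p) (K p) n * 0 - 1 * 1 = 0 := hm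
      simp at this
  | none =>
      intro h
      have hm : ((0 : K p), (1 : K p)) ∈ lineA p (wn p none) := by
        rw [h]; trivial
      have : (1 : K p) * 1 - 0 * 0 = 0 := hm
      simp at this

lemma center_lt_atomf (o : Option (ZMod p)) :
    Subgroup.center (GrpY p) < atomf p o := by
  rw [center_eq]
  refine lt_of_le_of_ne ((GU_le_iff p).mpr bot_le) (fun he => ?_)
  have h2 := GU_inj p he
  have h3 : wn p o ∈ (⊥ : AddSubgroup (K p × K p)) := by
    rw [h2]; exact self_mem_lineA p _
  rw [AddSubgroup.mem_bot] at h3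
  exact wn_ne_zero p o h3

lemma atomf_lt_top (o : Option (ZMod p)) : atomf p o < ⊤ := by
  refine lt_of_le_of_ne le_top (fun he => ?_)
  have h2 : GU p (lineA p (wn p o)) = GU p ⊤ := by rw [GU_top]; exact he
  exact lineA_wn_ne_top p o (GU_inj p h2)

lemma inCD_atomf (o : Option (ZMod p)) : inCD (atomf p o) :=
  (inCD_iff_measure p _).mpr (measure_atom p o)

lemma atoms_eq :
    {K : Subgroup (GrpY p) | inCD K ∧ Subgroup.center (GrpY p) < K ∧ K < ⊤} =
      Set.range (atomf p) := by
  ext K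
  simp only [Set.mem_setOf_eq, Set.mem_range]
  constructor
  · rintro ⟨h1, h2, h3⟩
    rcases (CD_classify p K).mp h1 with rfl | rfl | ⟨o, rfl⟩
    · exact absurd h2 (lt_irrefl _)
    · exact absurd h3 (lt_irrefl _)
    · exact ⟨o, rfl⟩
  · rintro ⟨o, rfl⟩
    exact ⟨inCD_atomf p o, center_lt_atomf p o, atomf_lt_top p o⟩

/-- commutativity criterion for atoms -/
lemma atomf_comm_iff (o : Option (ZMod p)) :
    (∀ a b : ↥(atomf p o), a * b = b * a) ↔ (∃ n : ZMod p, o = some n ∧ n ^ 2 = 1) := by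
  obtain ⟨τ, hτ⟩ := exists_nonfix p
  have hτ' : τ ^ p - τ ≠ 0 := sub_ne_zero.mpr hτ
  constructor
  · intro hcomm
    cases o with
    | none =>
        exfalso
        have hm1 : (⟨1, 0, 0⟩ : GrpY p) ∈ atomf p none := by
          show dt p ((1 : K p), (0 : K p)) ((1 : K p), (0 : K p)) = 0
          simp [dt]
        have hm2 : (⟨τ, 0, 0⟩ : GrpY p) ∈ atomf p none := by
          show dt p ((1 : K p), (0 : K p)) (τ, (0 : K p)) = 0
          simp [dt]
        have := hcomm ⟨_, hm1⟩ ⟨_, hm2⟩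
        have hval : (⟨1, 0, 0⟩ : GrpY p) * ⟨τ, 0, 0⟩ = ⟨τ, 0, 0⟩ * ⟨1, 0, 0⟩ :=
          congrArg Subtype.val this
        rw [mul_comm_iff] at hval
        have hval' : (1 : K p) * τ ^ p - 1 ^ p * τ -
            ((0 : K p) * 0 ^ p - 0 ^ p * 0) = 0 := hval
        apply hτ'
        rw [zero_pow (p_ne_zero p)] at hval'
        linear_combination hval'
    | some n =>
        set u := algebraMap (ZMod p) (K p) n with hu_def
        have hu : u ^ p = u := by
          rw [hu_def, ← map_pow, ZMod.pow_card]
        have hm1 : (⟨u, 1, 0⟩ : GrpY p) ∈ atomf p (some n) := by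
          show dt p (u, (1 : K p)) (u, (1 : K p)) = 0
          simp [dt]
        have hm2 : (⟨u * τ, τ, 0⟩ : GrpY p) ∈ atomf p (some n) := by
          show dt p (u, (1 : K p)) (u * τ, τ) = 0
          simp [dt]
        have := hcomm ⟨_, hm1⟩ ⟨_, hm2⟩
        have hval : (⟨u, 1, 0⟩ : GrpY p) * ⟨u * τ, τ, 0⟩ =
            ⟨u * τ, τ, 0⟩ * ⟨u, 1, 0⟩ := congrArg Subtype.val this
        rw [mul_comm_iff] at hval
        have hval' : u * (u * τ) ^ p - u ^ p * (u * τ) -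
            ((1 : K p) * τ ^ p - 1 ^ p * τ) = 0 := hval
        rw [mul_pow, one_pow, one_mul] at hval'
        have hfac : (u ^ 2 - 1) * (τ ^ p - τ) = 0 := by
          linear_combination hval' + (u * τ - u * τ ^ p) * hu
        have hu2 : u ^ 2 = 1 := by
          have := (mul_eq_zero.mp hfac).resolve_right hτ'
          linear_combination this
        refine ⟨n, rfl, ?_⟩
        have : algebraMap (ZMod p) (K p) (n ^ 2) = algebraMap (ZMod p) (K p) 1 := by
          rw [map_pow, map_one, ← hu_def, hu2]
        exact (algebraMap (ZMod p) (K p)).injective this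
  · rintro ⟨n, rfl, hn2⟩
    set u := algebraMap (ZMod p) (K p) n with hu_def
    have hu : u ^ p = u := by rw [hu_def, ← map_pow, ZMod.pow_card]
    have hu2 : u ^ 2 = 1 := by
      rw [hu_def, ← map_pow, hn2, map_one]
    have h1 : u * u ^ p = 1 := by rw [hu]; linear_combination hu2
    intro a b
    have hA : ∀ y ∈ lineA p (u, (1 : K p)), Af p (u, (1 : K p)) y = 0 ∧
        Bb p (u, (1 : K p)) y = 0 := by
      intro y hy
      obtain ⟨c', rfl⟩ := dep_scalar p (u, (1 : K p)) y
        (fun h => one_ne_zero (congrArg Prod.snd h)) hy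
      constructor
      · simp only [Af, smul_fst, smul_snd, mul_pow]
        linear_combination c' ^ p * h1
      · simp only [Bb, smul_fst, smul_snd]
        linear_combination c' * h1
    apply Subtype.ext
    show (a : GrpY p) * b = b * a
    rw [mul_comm_iff]
    have hbmem : ((b : GrpY p).x, (b : GrpY p).y) ∈ lineA p (u, (1 : K p)) := b.2
    have hamem : ((a : GrpY p).x, (a : GrpY p).y) ∈ lineA p (u, (1 : K p)) := a.2
    obtain ⟨c, hc⟩ := dep_scalar p (u, (1 : K p)) _
      (fun h => one_ne_zero (congrArg Prod.snd h)) hamem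
    rw [hc, Bf_smul_left]
    obtain ⟨hAf, hBb⟩ := hA _ hbmem
    rw [hAf, hBb, mul_zero, mul_zero, sub_zero]

lemma abelian_atoms_eq :
    {K : Subgroup (GrpY p) | inCD K ∧ Subgroup.center (GrpY p) < K ∧ K < ⊤ ∧
      ∀ x y : ↥K, x * y = y * x} =
      {atomf p (some 1), atomf p (some (-1))} := by
  ext K
  simp only [Set.mem_setOf_eq, Set.mem_insert_iff, Set.mem_singleton_iff]
  constructor
  · rintro ⟨h1, h2, h3, h4⟩
    have hK : K ∈ Set.range (atomf p) := by
      rw [← atoms_eq]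
      exact ⟨h1, h2, h3⟩
    obtain ⟨o, rfl⟩ := hK
    obtain ⟨n, rfl, hn2⟩ := (atomf_comm_iff p o).mp h4
    have : (n - 1) * (n + 1) = 0 := by linear_combination hn2
    rcases mul_eq_zero.mp this with h | h
    · left
      have : n = 1 := by linear_combination h
      rw [this]
    · right
      have : n = -1 := by linear_combination h
      rw [this]
  · intro h
    have hcomm : ∀ n : ZMod p, n ^ 2 = 1 →
        (∀ x y : ↥(atomf p (some n)), x * y = y * x) := by
      intro n hn2
      exact (atomf_comm_iff p (some n)).mpr ⟨n, rfl, hn2⟩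
    rcases h with rfl | rfl
    · exact ⟨inCD_atomf p _, center_lt_atomf p _, atomf_lt_top p _,
        hcomm 1 (one_pow 2)⟩
    · exact ⟨inCD_atomf p _, center_lt_atomf p _, atomf_lt_top p _,
        hcomm (-1) (neg_one_sq)⟩

theorem good : GoodCDwidthPplus1' (GrpY p) p := by
  refine ⟨card_GrpY p, ?_, ?_, ?_, ?_, ?_, ?_, ?_⟩
  · exact (inCD_iff_measure p ⊤).mpr (measure_top p)
  · exact (inCD_iff_measure p _).mpr (measure_center p)
  · intro K hK
    rcases (CD_classify p K).mp hK with rfl | rfl | ⟨o, rfl⟩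
    · exact le_refl _
    · exact le_top
    · rw [center_eq]
      exact (GU_le_iff p).mpr bot_le
  · intro K K' hK hK' hZK hKK' hK't
    rcases (CD_classify p K).mp hK with rfl | rfl | ⟨o, rfl⟩
    · exact absurd hZK (lt_irrefl _)
    · exact absurd (lt_of_le_of_lt hKK' hK't) (lt_irrefl _)
    · rcases (CD_classify p K').mp hK' with rfl | rfl | ⟨o', rfl⟩
      · exact absurd (lt_of_lt_of_le hZK hKK') (lt_irrefl _)
      · exact absurd hK't (lt_irrefl _)
      · have : o = o' := line_le_eq p ((GU_le_iff p).mp hKK')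
        rw [this]
  · rw [atoms_eq, ← Nat.card_coe_set_eq,
      Nat.card_congr (Equiv.ofInjective _ (atomf_inj p)).symm,
      Nat.card_eq_fintype_card, Fintype.card_option, ZMod.card]
  · intro hp2
    rw [abelian_atoms_eq]
    have h2 : ((2 : ℕ) : ZMod p) = 0 :=
      (ZMod.natCast_eq_zero_iff 2 p).mpr (by rw [hp2])
    have hneg : (-1 : ZMod p) = 1 := by
      push_cast at h2
      linear_combination -h2
    rw [hneg, Set.pair_eq_singleton]
    exact Set.ncard_singleton _
  · intro hodd
    rw [abelian_atoms_eq]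
    apply Set.ncard_pair
    intro h
    have h1 : (1 : ZMod p) = -1 := by
      have := atomf_inj p h
      have := Option.some.inj this
      exact this
    have h2 : ((2 : ℕ) : ZMod p) = 0 := by
      push_cast
      linear_combination h1
    have h3 : p ∣ 2 := (ZMod.natCast_eq_zero_iff 2 p).mp h2
    have h4 : p = 2 := (Nat.prime_dvd_prime_iff_eq (Fact.out : p.Prime) Nat.prime_two).mp h3
    rw [h4] at hodd
    exact (by decide : ¬ Odd 2) hodd


end S19
end

/-- for every prime `p` there is a finite group `Y` of order `p^9`
such that `CD(Y)` is a quasi-antichain of width `p + 1` with `Y ∈ CD(Y)`, where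
exactly one of the three atoms is abelian if `p = 2`, and exactly two of the
`p + 1` atoms are abelian if `p` is odd. -/
theorem stmt19 (p : ℕ) (hp : p.Prime) :
    ∃ (Y : Type) (grp : Group Y) (fin : Finite Y),
      @GoodCDwidthPplus1' Y grp fin p := by
  haveI : Fact p.Prime := ⟨hp⟩
  exact ⟨S19.GrpY p, inferInstance, inferInstance, S19.good p⟩
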